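/- Let a and b be the functions a = p₁²/(u₁−u₂) + p₂²/(u₂−u₁) − u₁² − u₁u₂ − u₂² and b = u₂·p₁²/(u₂−u₁) + u₁·p₂²/(u₁−u₂) + (u₁+u₂)·u₁·u₂ on the open set {u₁ ≠ u₂} ⊂ ℝ⁴. Then {a, b} = 0 identically, where {·,·} is the canonical Poisson bracket; i.e. a and b are in involution. -/

import Mathlib

/-- The canonical Poisson bracket on `ℝ⁴` with coordinates `(u₁,u₂,p₁,p₂)`:
`{f,g} = ∂f/∂u₁·∂g/∂p₁ + ∂f/∂u₂·∂g/∂p₂ − ∂f/∂p₁·∂g/∂u₁ − ∂f/∂p₂·∂g/∂u₂`. -/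
noncomputable def poissonBracket (f g : ℝ → ℝ → ℝ → ℝ → ℝ) (u₁ u₂ p₁ p₂ : ℝ) : ℝ :=
    deriv (fun x => f x u₂ p₁ p₂) u₁ * deriv (fun y => g u₁ u₂ y p₂) p₁
  + deriv (fun x => f u₁ x p₁ p₂) u₂ * deriv (fun y => g u₁ u₂ p₁ y) p₂
  - deriv (fun y => f u₁ u₂ y p₂) p₁ * deriv (fun x => g x u₂ p₁ p₂) u₁
  - deriv (fun y => f u₁ u₂ p₁ y) p₂ * deriv (fun x => g u₁ x p₁ p₂) u₂

/-- The integrals `a` and `b` of the Weierstrass separated relations are in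
involution with respect to the canonical Poisson bracket on `{u₁ ≠ u₂}`. -/
theorem a_b_in_involution (u₁ u₂ p₁ p₂ : ℝ) (h : u₁ ≠ u₂) :
    poissonBracket
      (fun x₁ x₂ y₁ y₂ => y₁ ^ 2 / (x₁ - x₂) + y₂ ^ 2 / (x₂ - x₁) - x₁ ^ 2 - x₁ * x₂ - x₂ ^ 2)
      (fun x₁ x₂ y₁ y₂ => x₂ * y₁ ^ 2 / (x₂ - x₁) + x₁ * y₂ ^ 2 / (x₁ - x₂) + (x₁ + x₂) * x₁ * x₂)
      u₁ u₂ p₁ p₂ = 0 := by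
  have hd : u₁ - u₂ ≠ 0 := sub_ne_zero.mpr h
  have hd' : u₂ - u₁ ≠ 0 := sub_ne_zero.mpr (Ne.symm h)
  -- ∂a/∂u₁
  have D1 : HasDerivAt (fun x : ℝ => p₁ ^ 2 / (x - u₂) + p₂ ^ 2 / (u₂ - x) - x ^ 2 - x * u₂ - u₂ ^ 2)
      (-(p₁ ^ 2) / (u₁ - u₂) ^ 2 + p₂ ^ 2 / (u₂ - u₁) ^ 2 - 2 * u₁ - u₂) u₁ := by
    have H := (((((hasDerivAt_const u₁ (p₁ ^ 2)).div ((hasDerivAt_id u₁).sub_const u₂) hd).add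
      ((hasDerivAt_const u₁ (p₂ ^ 2)).div ((hasDerivAt_const u₁ u₂).sub (hasDerivAt_id u₁)) hd')).sub
      (hasDerivAt_pow 2 u₁)).sub ((hasDerivAt_id u₁).mul_const u₂)).sub_const (u₂ ^ 2)
    refine H.congr_deriv ?_
    simp only [id, Pi.sub_apply, Pi.add_apply, Pi.mul_apply]
    field_simp
    try ring
  -- ∂a/∂u₂
  have D2 : HasDerivAt (fun x : ℝ => p₁ ^ 2 / (u₁ - x) + p₂ ^ 2 / (x - u₁) - u₁ ^ 2 - u₁ * x - x ^ 2)
      (p₁ ^ 2 / (u₁ - u₂) ^ 2 + -(p₂ ^ 2) / (u₂ - u₁) ^ 2 - u₁ - 2 * u₂) u₂ := by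
    have H := ((((((hasDerivAt_const u₂ (p₁ ^ 2)).div ((hasDerivAt_const u₂ u₁).sub (hasDerivAt_id u₂)) hd).add
      ((hasDerivAt_const u₂ (p₂ ^ 2)).div ((hasDerivAt_id u₂).sub_const u₁) hd')).sub_const (u₁ ^ 2)).sub
      ((hasDerivAt_const u₂ u₁).mul (hasDerivAt_id u₂))).sub (hasDerivAt_pow 2 u₂))
    refine H.congr_deriv ?_
    simp only [id, Pi.sub_apply, Pi.add_apply, Pi.mul_apply]
    field_simp
    try ring
  -- ∂a/∂p₁
  have D3 : HasDerivAt (fun y : ℝ => y ^ 2 / (u₁ - u₂) + p₂ ^ 2 / (u₂ - u₁) - u₁ ^ 2 - u₁ * u₂ - u₂ ^ 2)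
      (2 * p₁ / (u₁ - u₂)) p₁ := by
    have H := (((((hasDerivAt_pow 2 p₁).div_const (u₁ - u₂)).add_const (p₂ ^ 2 / (u₂ - u₁))).sub_const
      (u₁ ^ 2)).sub_const (u₁ * u₂)).sub_const (u₂ ^ 2)
    refine H.congr_deriv ?_
    push_cast
    try ring
  -- ∂a/∂p₂
  have D4 : HasDerivAt (fun y : ℝ => p₁ ^ 2 / (u₁ - u₂) + y ^ 2 / (u₂ - u₁) - u₁ ^ 2 - u₁ * u₂ - u₂ ^ 2)
      (2 * p₂ / (u₂ - u₁)) p₂ := by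
    have H := ((((((hasDerivAt_pow 2 p₂).div_const (u₂ - u₁)).const_add (p₁ ^ 2 / (u₁ - u₂))).sub_const
      (u₁ ^ 2)).sub_const (u₁ * u₂)).sub_const (u₂ ^ 2))
    refine H.congr_deriv ?_
    push_cast
    try ring
  -- ∂b/∂u₁
  have E1 : HasDerivAt (fun x : ℝ => u₂ * p₁ ^ 2 / (u₂ - x) + x * p₂ ^ 2 / (x - u₂) + (x + u₂) * x * u₂)
      (u₂ * p₁ ^ 2 / (u₂ - u₁) ^ 2 + (p₂ ^ 2 / (u₁ - u₂) - u₁ * p₂ ^ 2 / (u₁ - u₂) ^ 2) + (2 * u₁ * u₂ + u₂ ^ 2)) u₁ := by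
    have H := (((hasDerivAt_const u₁ (u₂ * p₁ ^ 2)).div ((hasDerivAt_const u₁ u₂).sub (hasDerivAt_id u₁)) hd').add
      (((hasDerivAt_id u₁).mul_const (p₂ ^ 2)).div ((hasDerivAt_id u₁).sub_const u₂) hd)).add
      ((((hasDerivAt_id u₁).add_const u₂).mul (hasDerivAt_id u₁)).mul_const u₂)
    refine H.congr_deriv ?_
    simp only [id, Pi.sub_apply, Pi.add_apply, Pi.mul_apply]
    field_simp
    try ring
  -- ∂b/∂u₂
  have E2 : HasDerivAt (fun x : ℝ => x * p₁ ^ 2 / (x - u₁) + u₁ * p₂ ^ 2 / (u₁ - x) + (u₁ + x) * u₁ * x)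
      ((p₁ ^ 2 / (u₂ - u₁) - u₂ * p₁ ^ 2 / (u₂ - u₁) ^ 2) + u₁ * p₂ ^ 2 / (u₁ - u₂) ^ 2 + (u₁ ^ 2 + 2 * u₁ * u₂)) u₂ := by
    have H := ((((hasDerivAt_id u₂).mul_const (p₁ ^ 2)).div ((hasDerivAt_id u₂).sub_const u₁) hd').add
      ((hasDerivAt_const u₂ (u₁ * p₂ ^ 2)).div ((hasDerivAt_const u₂ u₁).sub (hasDerivAt_id u₂)) hd)).add
      ((((hasDerivAt_const u₂ u₁).add (hasDerivAt_id u₂)).mul_const u₁).mul (hasDerivAt_id u₂))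
    refine H.congr_deriv ?_
    simp only [id, Pi.sub_apply, Pi.add_apply, Pi.mul_apply]
    field_simp
    try ring
  -- ∂b/∂p₁
  have E3 : HasDerivAt (fun y : ℝ => u₂ * y ^ 2 / (u₂ - u₁) + u₁ * p₂ ^ 2 / (u₁ - u₂) + (u₁ + u₂) * u₁ * u₂)
      (2 * u₂ * p₁ / (u₂ - u₁)) p₁ := by
    have H := (((((hasDerivAt_pow 2 p₁).const_mul u₂).div_const (u₂ - u₁)).add_const
      (u₁ * p₂ ^ 2 / (u₁ - u₂))).add_const ((u₁ + u₂) * u₁ * u₂))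
    refine H.congr_deriv ?_
    push_cast
    try ring
  -- ∂b/∂p₂
  have E4 : HasDerivAt (fun y : ℝ => u₂ * p₁ ^ 2 / (u₂ - u₁) + u₁ * y ^ 2 / (u₁ - u₂) + (u₁ + u₂) * u₁ * u₂)
      (2 * u₁ * p₂ / (u₁ - u₂)) p₂ := by
    have H := (((((hasDerivAt_pow 2 p₂).const_mul u₁).div_const (u₁ - u₂)).const_add
      (u₂ * p₁ ^ 2 / (u₂ - u₁))).add_const ((u₁ + u₂) * u₁ * u₂))
    refine H.congr_deriv ?_
    push_cast
    try ring
  unfold poissonBracket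
  rw [D1.deriv, D2.deriv, D3.deriv, D4.deriv, E1.deriv, E2.deriv, E3.deriv, E4.deriv]
  field_simp
  ring
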